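/- Fix T0 ∈ ℝ and let I : ℝ → ℝ be continuous. Define Φ(U,T) := exp(−∫_U^T I(V) dV) and F(T) := 1 − I(T)·∫_{T0}^T Φ(U,T) dU. Then for every T ≥ T0, I(T)·∫_{T0}^T F(t) dt = 1 − F(T). -/
import Mathlib


open MeasureTheory

/-- The forward bond price `F(T) = 1 − I(T)·∫_{T0}^T Φ(U,T) dU`, with
`Φ(U,T) = exp(−∫_U^T I)`, reconstructed from the forward IRS curve `I`, satisfies the
fundamental IRS relation `I(T)·∫_{T0}^T F = 1 − F(T)` for all `T ≥ T0`. -/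
theorem stmt_14
    (T0 : ℝ) (I : ℝ → ℝ) (hI : Continuous I)
    (Φ : ℝ → ℝ → ℝ) (hΦ : ∀ U T, Φ U T = Real.exp (-∫ V in U..T, I V))
    (F : ℝ → ℝ) (hF : ∀ T, F T = 1 - I T * ∫ U in T0..T, Φ U T) :
    ∀ T, T0 ≤ T → I T * (∫ t in T0..T, F t) = 1 - F T := by
  set J : ℝ → ℝ := fun t => ∫ V in T0..t, I V with hJ
  set E : ℝ → ℝ := fun t => Real.exp (J t) with hEdef
  set H : ℝ → ℝ := fun t => ∫ U in T0..t, E U with hHdef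
  set g : ℝ → ℝ := fun t => Real.exp (-(J t)) * H t with hgdef
  have hJderiv : ∀ t, HasDerivAt J (I t) t := fun t =>
    intervalIntegral.integral_hasDerivAt_right (hI.intervalIntegrable T0 t)
      (hI.stronglyMeasurableAtFilter _ _) hI.continuousAt
  have hJcont : Continuous J :=
    continuous_iff_continuousAt.2 fun t => (hJderiv t).continuousAt
  have hEcont : Continuous E := Real.continuous_exp.comp hJcont
  have hHderiv : ∀ t, HasDerivAt H (E t) t := fun t =>
    intervalIntegral.integral_hasDerivAt_right (hEcont.intervalIntegrable T0 t)
      (hEcont.stronglyMeasurableAtFilter _ _) hEcont.continuousAt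
  -- rewrite the Φ-integral in terms of g
  have hgΦ : ∀ t, (∫ U in T0..t, Φ U t) = g t := by
    intro t
    have : ∀ U, Φ U t = Real.exp (-(J t)) * E U := by
      intro U
      have hsplit : (∫ V in T0..U, I V) + (∫ V in U..t, I V) = ∫ V in T0..t, I V :=
        intervalIntegral.integral_add_adjacent_intervals
          (hI.intervalIntegrable T0 U) (hI.intervalIntegrable U t)
      rw [hΦ, hEdef, ← Real.exp_add]
      congr 1
      simp only [hJ]
      linarith
    rw [hgdef]
    simp only [this, hHdef]
    rw [intervalIntegral.integral_const_mul]
  have hFg : ∀ t, F t = 1 - I t * g t := fun t => by rw [hF, hgΦ]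
  have hgderiv : ∀ t, HasDerivAt g (F t) t := by
    intro t
    have h1 : HasDerivAt (fun t => Real.exp (-(J t))) (Real.exp (-(J t)) * (-(I t))) t :=
      ((hJderiv t).neg).exp
    have h2 := h1.mul (hHderiv t)
    have heq : Real.exp (-(J t)) * (-(I t)) * H t + Real.exp (-(J t)) * E t = F t := by
      rw [hFg, hgdef, hEdef, ← Real.exp_add]
      simp
      ring
    rw [← heq]
    exact h2
  have hgcont : Continuous g :=
    continuous_iff_continuousAt.2 fun t => (hgderiv t).differentiableAt.continuousAt
  have hFcont : Continuous F := by
    have : F = fun t => 1 - I t * g t := funext hFg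
    rw [this]
    exact continuous_const.sub (hI.mul hgcont)
  intro T hT
  have hint : (∫ t in T0..T, F t) = g T - g T0 :=
    intervalIntegral.integral_eq_sub_of_hasDerivAt (fun t _ => hgderiv t)
      (hFcont.intervalIntegrable T0 T)
  have hg0 : g T0 = 0 := by
    simp [hgdef, hHdef]
  rw [hint, hg0, hFg]
  ring
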